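/- arXiv:2112.15002 — 2 statements merged into one kernel-verified Lean document; each statement's English description precedes it below -/
import Mathlib

section
/- Let d ≥ 1, let G ∈ M_d(ℂ) be a Hermitian unitary matrix, let O ∈ M_d(ℂ) be Hermitian, and let ρ ∈ M_d(ℂ) be a density matrix. With W_±(θ) = exp(−i(θ ± π/4)G) and O₂ = (O − G·O·G)/2, for every θ ∈ ℝ one has Tr[O·W₊(θ)·ρ·W₊(θ)†] − Tr[O·W₋(θ)·ρ·W₋(θ)†] = −2·sin(2θ)·Tr[O₂ρ] − 2·cos(2θ)·Tr[iO₂Gρ]. -/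
open Matrix MeasureTheory
open scoped ComplexOrder

set_option maxHeartbeats 1000000

noncomputable section

/-- The rotation `W(θ) = exp(−iθG)` generated by a matrix `G`. -/
def Wrot {d : ℕ} (G : Matrix (Fin d) (Fin d) ℂ) (θ : ℝ) : Matrix (Fin d) (Fin d) ℂ :=
  NormedSpace.exp ((-(Complex.I * (θ : ℂ))) • G)

/-- The commuting part `O₁ = (O + G·O·G)/2` of `O` with respect to `G`. -/
def Opart1 {d : ℕ} (G O : Matrix (Fin d) (Fin d) ℂ) : Matrix (Fin d) (Fin d) ℂ :=
  (2⁻¹ : ℂ) • (O + G * O * G)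

/-- The anticommuting part `O₂ = (O − G·O·G)/2` of `O` with respect to `G`. -/
def Opart2 {d : ℕ} (G O : Matrix (Fin d) (Fin d) ℂ) : Matrix (Fin d) (Fin d) ℂ :=
  (2⁻¹ : ℂ) • (O - G * O * G)

lemma exp_smul_invol {d : ℕ} (G : Matrix (Fin d) (Fin d) ℂ) (hG : G * G = 1) (z : ℂ) :
    NormedSpace.exp (z • G) = Complex.cosh z • 1 + Complex.sinh z • G := by
  rw [NormedSpace.exp_eq_tsum ℂ]
  refine HasSum.tsum_eq ?_
  have hpow : ∀ k : ℕ, G ^ (2 * k) = 1 := by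
    intro k
    rw [pow_mul, show G ^ 2 = 1 by rw [pow_two, hG], one_pow]
  have heven : HasSum (fun k : ℕ => ((Nat.factorial (2 * k) : ℂ))⁻¹ • (z • G) ^ (2 * k))
      (Complex.cosh z • (1 : Matrix (Fin d) (Fin d) ℂ)) := by
    have := (Complex.hasSum_cosh z).smul_const (1 : Matrix (Fin d) (Fin d) ℂ)
    convert this using 2 with k
    rw [smul_pow, hpow, smul_smul, div_eq_mul_inv, mul_comm]
  have hodd : HasSum (fun k : ℕ => ((Nat.factorial (2 * k + 1) : ℂ))⁻¹ • (z • G) ^ (2 * k + 1))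
      (Complex.sinh z • G) := by
    have := (Complex.hasSum_sinh z).smul_const G
    convert this using 2 with k
    have hpow' : G ^ (2 * k + 1) = G := by rw [pow_succ, hpow, one_mul]
    rw [smul_pow, hpow', smul_smul, div_eq_mul_inv, mul_comm]
  exact heven.even_add_odd hodd

lemma Wrot_eq {d : ℕ} (G : Matrix (Fin d) (Fin d) ℂ) (hG : G * G = 1) (t : ℝ) :
    Wrot G t = (Real.cos t : ℂ) • 1 - (Complex.I * (Real.sin t : ℂ)) • G := by
  rw [Wrot, exp_smul_invol G hG]
  have h1 : (-(Complex.I * (t : ℂ))) = ((-t : ℝ) : ℂ) * Complex.I := by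
    push_cast; ring
  rw [h1, Complex.cosh_mul_I, Complex.sinh_mul_I, Complex.ofReal_cos, Complex.ofReal_sin,
    Complex.ofReal_neg, Complex.cos_neg, Complex.sin_neg]
  rw [show (-Complex.sin (t : ℂ) * Complex.I) = -(Complex.I * Complex.sin (t : ℂ)) by ring,
    neg_smul, sub_eq_add_neg]

/-- Pointwise shifted-difference formula: with `W_±(θ) = exp(−i(θ ± π/4)G)` and
`O₂ = (O − GOG)/2`, one has
`Tr[O W₊ ρ W₊†] − Tr[O W₋ ρ W₋†] = −2sin(2θ)·Tr[O₂ρ] − 2cos(2θ)·Tr[iO₂Gρ]`. -/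
theorem trace_shifted_difference
    (d : ℕ) (hd : 1 ≤ d)
    (G O : Matrix (Fin d) (Fin d) ℂ)
    (hGherm : G.IsHermitian) (hGunit : G * G = 1) (hO : O.IsHermitian)
    (ρ : Matrix (Fin d) (Fin d) ℂ) (hρ : ρ.PosSemidef) (hρtr : ρ.trace = 1)
    (θ : ℝ) :
    ((O * (Wrot G (θ + Real.pi / 4) * ρ * (Wrot G (θ + Real.pi / 4))ᴴ)).trace.re)
      - ((O * (Wrot G (θ - Real.pi / 4) * ρ * (Wrot G (θ - Real.pi / 4))ᴴ)).trace.re)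
      = -2 * Real.sin (2 * θ) * ((Opart2 G O * ρ).trace.re)
        - 2 * Real.cos (2 * θ) * (((Complex.I • (Opart2 G O * G)) * ρ).trace.re) := by
  have hWH : ∀ c s : ℝ, ((c : ℂ) • 1 - (Complex.I * (s : ℂ)) • G)ᴴ
      = (c : ℂ) • 1 + (Complex.I * (s : ℂ)) • G := by
    intro c s
    rw [conjTranspose_sub, conjTranspose_smul, conjTranspose_smul,
      conjTranspose_one, hGherm.eq]
    rw [show (star ((c : ℂ))) = (c : ℂ) from Complex.conj_ofReal _,
      show (star (Complex.I * (s : ℂ))) = -(Complex.I * (s : ℂ)) by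
        simp only [Complex.star_def, _root_.map_mul, Complex.conj_I, Complex.conj_ofReal]
        ring,
      neg_smul, sub_neg_eq_add]
  have expand : ∀ c s : ℝ,
      (O * (((c : ℂ) • 1 - (Complex.I * (s : ℂ)) • G) * ρ
        * ((c : ℂ) • 1 + (Complex.I * (s : ℂ)) • G))).trace
      = (c : ℂ)^2 * (O * ρ).trace
        + Complex.I * c * s * ((O * (ρ * G)).trace - (O * (G * ρ)).trace)
        + (s : ℂ)^2 * (O * (G * (ρ * G))).trace := by
    intro c s
    simp only [Matrix.sub_mul, Matrix.add_mul, Matrix.mul_add, Matrix.mul_sub,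
      smul_mul_assoc, Matrix.mul_smul, Matrix.one_mul, Matrix.mul_one,
      trace_add, trace_sub, trace_smul, smul_eq_mul, mul_assoc]
    linear_combination (-((s : ℂ))^2 * (O * (G * (ρ * G))).trace) * Complex.I_sq
  have hplus := expand (Real.cos (θ + Real.pi / 4)) (Real.sin (θ + Real.pi / 4))
  have hminus := expand (Real.cos (θ - Real.pi / 4)) (Real.sin (θ - Real.pi / 4))
  have hcycGOG : (G * O * G * ρ).trace = (O * (G * (ρ * G))).trace := by
    rw [show G * O * G * ρ = G * (O * (G * ρ)) by simp [mul_assoc], trace_mul_comm]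
    simp [mul_assoc]
  have hcycGO : (G * O * ρ).trace = (O * (ρ * G)).trace := by
    rw [show G * O * ρ = G * (O * ρ) by rw [mul_assoc], trace_mul_comm]
    simp [mul_assoc]
  have hP : (Opart2 G O * ρ).trace
      = (2⁻¹ : ℂ) * ((O * ρ).trace - (O * (G * (ρ * G))).trace) := by
    rw [Opart2, smul_mul_assoc, trace_smul, Matrix.sub_mul, trace_sub, hcycGOG,
      smul_eq_mul]
  have hGOGG : G * O * G * G = G * O := by
    rw [Matrix.mul_assoc (G * O) G G, hGunit, Matrix.mul_one]
  have hQ : ((Complex.I • (Opart2 G O * G)) * ρ).trace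
      = Complex.I * ((2⁻¹ : ℂ) * ((O * (G * ρ)).trace - (O * (ρ * G)).trace)) := by
    rw [smul_mul_assoc, trace_smul, smul_eq_mul, Opart2, smul_mul_assoc, smul_mul_assoc,
      trace_smul, smul_eq_mul, Matrix.sub_mul, Matrix.sub_mul, hGOGG, trace_sub,
      Matrix.mul_assoc O G ρ, hcycGO]
  have h2 : Real.sqrt 2 ^ 2 = 2 := Real.sq_sqrt (by norm_num)
  have hpyth := Real.sin_sq_add_cos_sq θ
  have hc2 : Real.cos (θ + Real.pi / 4) ^ 2 - Real.cos (θ - Real.pi / 4) ^ 2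
      = -Real.sin (2 * θ) := by
    rw [Real.cos_add, Real.cos_sub, Real.cos_pi_div_four, Real.sin_pi_div_four,
      Real.sin_two_mul]
    linear_combination (-(Real.sin θ * Real.cos θ)) * h2
  have hs2 : Real.sin (θ + Real.pi / 4) ^ 2 - Real.sin (θ - Real.pi / 4) ^ 2
      = Real.sin (2 * θ) := by
    rw [Real.sin_add, Real.sin_sub, Real.cos_pi_div_four, Real.sin_pi_div_four,
      Real.sin_two_mul]
    linear_combination (Real.sin θ * Real.cos θ) * h2
  have hcs : Real.cos (θ + Real.pi / 4) * Real.sin (θ + Real.pi / 4)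
      - Real.cos (θ - Real.pi / 4) * Real.sin (θ - Real.pi / 4) = Real.cos (2 * θ) := by
    rw [Real.sin_add, Real.sin_sub, Real.cos_add, Real.cos_sub, Real.cos_pi_div_four,
      Real.sin_pi_div_four, Real.cos_two_mul]
    linear_combination ((Real.cos θ ^ 2 - Real.sin θ ^ 2) / 2) * h2 - hpyth
  have hc2' := congrArg (Complex.ofReal) hc2
  have hs2' := congrArg (Complex.ofReal) hs2
  have hcs' := congrArg (Complex.ofReal) hcs
  push_cast at hc2' hs2' hcs'
  rw [Wrot_eq G hGunit (θ + Real.pi / 4), Wrot_eq G hGunit (θ - Real.pi / 4), hWH, hWH,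
    hplus, hminus, hP, hQ, ← Complex.sub_re]

  have key : ((Real.cos (θ + Real.pi / 4) : ℂ) ^ 2 * (O * ρ).trace
        + Complex.I * (Real.cos (θ + Real.pi / 4)) * (Real.sin (θ + Real.pi / 4))
          * ((O * (ρ * G)).trace - (O * (G * ρ)).trace)
        + (Real.sin (θ + Real.pi / 4) : ℂ) ^ 2 * (O * (G * (ρ * G))).trace)
      - ((Real.cos (θ - Real.pi / 4) : ℂ) ^ 2 * (O * ρ).trace
        + Complex.I * (Real.cos (θ - Real.pi / 4)) * (Real.sin (θ - Real.pi / 4))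
          * ((O * (ρ * G)).trace - (O * (G * ρ)).trace)
        + (Real.sin (θ - Real.pi / 4) : ℂ) ^ 2 * (O * (G * (ρ * G))).trace)
      = ((-2 * Real.sin (2 * θ) : ℝ) : ℂ)
          * ((2⁻¹ : ℂ) * ((O * ρ).trace - (O * (G * (ρ * G))).trace))
        + ((-2 * Real.cos (2 * θ) : ℝ) : ℂ)
          * (Complex.I * ((2⁻¹ : ℂ) * ((O * (G * ρ)).trace - (O * (ρ * G)).trace))) := by
    push_cast
    linear_combination (O * ρ).trace * hc2' + (O * (G * (ρ * G))).trace * hs2'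
      + Complex.I * ((O * (ρ * G)).trace - (O * (G * ρ)).trace) * hcs'
  rw [key, Complex.add_re, Complex.re_ofReal_mul, Complex.re_ofReal_mul]
  ring
end
end

section
/- Let d ≥ 1, let G ∈ M_d(ℂ) be a Hermitian unitary matrix, let O ∈ M_d(ℂ) be Hermitian with O·G = −G·O, and let ρ ∈ M_d(ℂ) be a density matrix. With W_±(θ) = exp(−i(θ ± π/4)G), one has (1/(2π)) ∫₀^{2π} ( Tr[O·W₊(θ)·ρ·W₊(θ)†] − Tr[O·W₋(θ)·ρ·W₋(θ)†] )² dθ = 2·(Tr[Oρ])² + 2·(Tr[iOGρ])², and in particular this expectation is at least 2·(Tr[Oρ])². -/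
open Matrix MeasureTheory
open scoped ComplexOrder

noncomputable section

lemma wrot_eq {d : ℕ} (G : Matrix (Fin d) (Fin d) ℂ) (hG : G * G = 1) (θ : ℝ) :
    Wrot G θ = (Real.cos θ : ℂ) • (1 : Matrix (Fin d) (Fin d) ℂ)
        + (-(Complex.I * (Real.sin θ : ℂ))) • G := by
  letI : SeminormedRing (Matrix (Fin d) (Fin d) ℂ) := Matrix.linftyOpSemiNormedRing
  letI : NormedRing (Matrix (Fin d) (Fin d) ℂ) := Matrix.linftyOpNormedRing
  letI : NormedAlgebra ℂ (Matrix (Fin d) (Fin d) ℂ) := Matrix.linftyOpNormedAlgebra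
  set z : ℂ := -(Complex.I * (θ : ℂ)) with hz
  have hz2 : z ^ 2 = -((θ : ℂ) ^ 2) := by
    rw [hz]; ring_nf; rw [Complex.I_sq]; ring
  set f : ℕ → Matrix (Fin d) (Fin d) ℂ := fun n => (n.factorial : ℂ)⁻¹ • (z • G) ^ n with hf
  have hsum : Summable f := NormedSpace.expSeries_summable' (z • G)
  have hGpow : ∀ k : ℕ, G ^ (2 * k) = 1 := by
    intro k; rw [pow_mul, show G ^ 2 = 1 by rw [pow_two, hG], one_pow]
  have hzpow : ∀ k : ℕ, z ^ (2 * k) = (-1 : ℂ) ^ k * (θ : ℂ) ^ (2 * k) := by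
    intro k; rw [pow_mul, hz2, pow_mul]; rw [neg_pow]
  have hcos : HasSum (fun k => f (2 * k)) ((Real.cos θ : ℂ) • (1 : Matrix (Fin d) (Fin d) ℂ)) := by
    have h1 : HasSum (fun k : ℕ => (-1 : ℂ) ^ k * (θ : ℂ) ^ (2 * k) / ((2 * k).factorial : ℂ))
        (Complex.cos θ) := Complex.hasSum_cos (θ : ℂ)
    have h2 := h1.smul_const (1 : Matrix (Fin d) (Fin d) ℂ)
    rw [show Complex.cos (θ:ℂ) = (Real.cos θ : ℂ) by rw [Complex.ofReal_cos]] at h2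
    convert h2 using 2 with k
    rw [hf]; simp only [smul_pow, hGpow, smul_smul, hzpow]
    congr 1
    rw [div_eq_mul_inv]; ring
  have hsin : HasSum (fun k => f (2 * k + 1)) ((-(Complex.I * (Real.sin θ : ℂ))) • G) := by
    have h1 : HasSum (fun k : ℕ => (-1 : ℂ) ^ k * (θ : ℂ) ^ (2 * k + 1) / ((2 * k + 1).factorial : ℂ))
        (Complex.sin θ) := Complex.hasSum_sin (θ : ℂ)
    have h1' := h1.mul_left (-(Complex.I))
    have h2 := h1'.smul_const G
    rw [show Complex.sin (θ:ℂ) = (Real.sin θ : ℂ) by rw [Complex.ofReal_sin]] at h2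
    convert h2 using 2 with k
    · rw [hf]; simp only [smul_pow, smul_smul]
      rw [show G ^ (2 * k + 1) = G by rw [pow_succ, hGpow, one_mul]]
      congr 1
      rw [pow_succ, hzpow, hz, div_eq_mul_inv]
      ring
    · rw [Complex.ofReal_sin]; ring
  have hexp : NormedSpace.exp (z • G) = ∑' n, f n := by
    rw [NormedSpace.exp_eq_tsum (𝕂 := ℂ), hf]
  rw [Wrot, ← hz, hexp, ← tsum_even_add_odd hcos.summable hsin.summable, hcos.tsum_eq,
    hsin.tsum_eq]

lemma wrotH_eq {d : ℕ} (G : Matrix (Fin d) (Fin d) ℂ) (hGherm : G.IsHermitian)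
    (hG : G * G = 1) (θ : ℝ) :
    (Wrot G θ)ᴴ = (Real.cos θ : ℂ) • (1 : Matrix (Fin d) (Fin d) ℂ)
        + (Complex.I * (Real.sin θ : ℂ)) • G := by
  rw [wrot_eq G hG θ]
  rw [conjTranspose_add, conjTranspose_smul, conjTranspose_smul, conjTranspose_one, hGherm.eq]
  congr 1
  · congr 1
    simp [Complex.ext_iff]
  · congr 1
    simp [Complex.ext_iff]

lemma trace_key {d : ℕ} (G O ρ : Matrix (Fin d) (Fin d) ℂ)
    (hGherm : G.IsHermitian) (hG : G * G = 1)
    (hanti : O * G = -(G * O)) (θ : ℝ) :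
    (O * (Wrot G θ * ρ * (Wrot G θ)ᴴ)).trace
      = (Real.cos (2*θ) : ℂ) * (O * ρ).trace
        - (Real.sin (2*θ) : ℂ) * (Complex.I * (O * (G * ρ)).trace) := by
  have hGO : G * O = -(O * G) := by rw [hanti, neg_neg]
  have hGOG : G * (O * G) = -O := by
    rw [hanti, mul_neg, ← mul_assoc, hG, one_mul]
  have h1 : (O * (ρ * G)).trace = -(O * (G * ρ)).trace := by
    rw [← mul_assoc, Matrix.trace_mul_comm, ← mul_assoc, hGO]
    simp [mul_assoc]
  have h2 : (O * (G * (ρ * G))).trace = -(O * ρ).trace := by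
    have e : O * (G * (ρ * G)) = (O * G * ρ) * G := by noncomm_ring
    rw [e, Matrix.trace_mul_comm, ← mul_assoc, hGOG]
    simp
  have hc2 : (Real.cos (2*θ) : ℂ) = (Real.cos θ : ℂ)^2 - (Real.sin θ : ℂ)^2 := by
    have h : Real.cos (2*θ) = Real.cos θ^2 - Real.sin θ^2 := by
      rw [Real.cos_two_mul]; nlinarith [Real.sin_sq_add_cos_sq θ]
    exact_mod_cast congrArg Complex.ofReal h
  have hs2 : (Real.sin (2*θ) : ℂ) = 2 * (Real.sin θ : ℂ) * (Real.cos θ : ℂ) := by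
    rw [Real.sin_two_mul]; push_cast; ring
  rw [wrotH_eq G hGherm hG θ, wrot_eq G hG θ, hc2, hs2]
  simp only [Matrix.add_mul, Matrix.mul_add, smul_mul_assoc, mul_smul_comm,
    Matrix.trace_add, Matrix.trace_smul, Matrix.one_mul, Matrix.mul_one,
    smul_smul, smul_eq_mul, mul_assoc]
  rw [h1, h2]
  linear_combination ((Real.sin θ:ℂ)^2 * (O*ρ).trace) * Complex.I_sq

/-- For a Hermitian observable `O` anticommuting with the Hermitian unitary `G`,
with `W_±(θ) = exp(−i(θ ± π/4)G)`, one has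
`E_θ (Tr[O W₊ ρ W₊†] − Tr[O W₋ ρ W₋†])² = 2 Tr[Oρ]² + 2 Tr[iOGρ]² ≥ 2 Tr[Oρ]²`,
with `θ` uniform on `[0, 2π]`. -/
theorem expectation_shifted_difference_sq_anticommuting
    (d : ℕ) (hd : 1 ≤ d)
    (G O : Matrix (Fin d) (Fin d) ℂ)
    (hGherm : G.IsHermitian) (hGunit : G * G = 1) (hO : O.IsHermitian)
    (hanti : O * G = -(G * O))
    (ρ : Matrix (Fin d) (Fin d) ℂ) (hρ : ρ.PosSemidef) (hρtr : ρ.trace = 1) :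
    (1 / (2 * Real.pi)) * (∫ θ in (0:ℝ)..(2 * Real.pi),
        (((O * (Wrot G (θ + Real.pi / 4) * ρ * (Wrot G (θ + Real.pi / 4))ᴴ)).trace.re)
          - ((O * (Wrot G (θ - Real.pi / 4) * ρ * (Wrot G (θ - Real.pi / 4))ᴴ)).trace.re)) ^ 2)
      = 2 * ((O * ρ).trace.re) ^ 2 + 2 * (((Complex.I • (O * G)) * ρ).trace.re) ^ 2
    ∧ (1 / (2 * Real.pi)) * (∫ θ in (0:ℝ)..(2 * Real.pi),
        (((O * (Wrot G (θ + Real.pi / 4) * ρ * (Wrot G (θ + Real.pi / 4))ᴴ)).trace.re)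
          - ((O * (Wrot G (θ - Real.pi / 4) * ρ * (Wrot G (θ - Real.pi / 4))ᴴ)).trace.re)) ^ 2)
      ≥ 2 * ((O * ρ).trace.re) ^ 2 := by
  set ar : ℝ := (O * ρ).trace.re with har
  set br : ℝ := ((Complex.I • (O * G)) * ρ).trace.re with hbr
  -- real-part formula for the trace at any angle
  have hbr' : br = (Complex.I * (O * (G * ρ)).trace).re := by
    rw [hbr, smul_mul_assoc, Matrix.trace_smul, mul_assoc, smul_eq_mul]
  have hre : ∀ φ : ℝ, (O * (Wrot G φ * ρ * (Wrot G φ)ᴴ)).trace.re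
      = Real.cos (2*φ) * ar - Real.sin (2*φ) * br := by
    intro φ
    rw [trace_key G O ρ hGherm hGunit hanti φ, hbr', har, Complex.sub_re,
      Complex.re_ofReal_mul, Complex.re_ofReal_mul]
  -- the integrand equals a trig polynomial
  have hint : ∀ θ : ℝ,
      (((O * (Wrot G (θ + Real.pi / 4) * ρ * (Wrot G (θ + Real.pi / 4))ᴴ)).trace.re)
        - ((O * (Wrot G (θ - Real.pi / 4) * ρ * (Wrot G (θ - Real.pi / 4))ᴴ)).trace.re) ) ^ 2
      = 2*ar^2 + 2*br^2 + 2*(br^2 - ar^2) * Real.cos (4*θ) + 4*ar*br*Real.sin (4*θ) := by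
    intro θ
    rw [hre, hre]
    rw [show 2*(θ + Real.pi/4) = 2*θ + Real.pi/2 by ring,
        show 2*(θ - Real.pi/4) = 2*θ - Real.pi/2 by ring,
        show (4:ℝ)*θ = 2*(2*θ) by ring,
        Real.cos_add_pi_div_two, Real.sin_add_pi_div_two,
        Real.cos_sub_pi_div_two, Real.sin_sub_pi_div_two,
        Real.cos_two_mul (2*θ), Real.sin_two_mul (2*θ)]
    linear_combination (4*ar^2) * Real.sin_sq_add_cos_sq (2*θ)
  -- compute the integral via an antiderivative
  have hIntEq : (∫ θ in (0:ℝ)..(2 * Real.pi),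
      (((O * (Wrot G (θ + Real.pi / 4) * ρ * (Wrot G (θ + Real.pi / 4))ᴴ)).trace.re)
        - ((O * (Wrot G (θ - Real.pi / 4) * ρ * (Wrot G (θ - Real.pi / 4))ᴴ)).trace.re)) ^ 2)
      = ∫ θ in (0:ℝ)..(2 * Real.pi),
        (2*ar^2 + 2*br^2 + 2*(br^2 - ar^2) * Real.cos (4*θ) + 4*ar*br*Real.sin (4*θ)) := by
    apply intervalIntegral.integral_congr
    intro θ _
    exact hint θ
  have hderiv : ∀ θ : ℝ, HasDerivAt (fun x : ℝ =>
        (2*ar^2 + 2*br^2)*x + ((br^2 - ar^2)/2) * Real.sin (4*x) - ar*br*Real.cos (4*x))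
      (2*ar^2 + 2*br^2 + 2*(br^2 - ar^2) * Real.cos (4*θ) + 4*ar*br*Real.sin (4*θ)) θ := by
    intro θ
    have h4 : HasDerivAt (fun x : ℝ => 4*x) 4 θ := by
      simpa using (hasDerivAt_id θ).const_mul (4:ℝ)
    have hA : HasDerivAt (fun x : ℝ => (2*ar^2 + 2*br^2)*x) (2*ar^2 + 2*br^2) θ := by
      simpa using (hasDerivAt_id θ).const_mul (2*ar^2 + 2*br^2)
    have hB := (h4.sin.const_mul ((br^2 - ar^2)/2))
    have hC := (h4.cos.const_mul (ar*br))
    have := (hA.add hB).sub hC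
    refine this.congr_deriv ?_
    ring
  have hcont : IntervalIntegrable (fun θ : ℝ =>
      2*ar^2 + 2*br^2 + 2*(br^2 - ar^2) * Real.cos (4*θ) + 4*ar*br*Real.sin (4*θ))
      volume 0 (2 * Real.pi) := by
    apply Continuous.intervalIntegrable
    fun_prop
  have hIntVal : (∫ θ in (0:ℝ)..(2 * Real.pi),
        (2*ar^2 + 2*br^2 + 2*(br^2 - ar^2) * Real.cos (4*θ) + 4*ar*br*Real.sin (4*θ)))
      = 4 * Real.pi * (ar^2 + br^2) := by
    rw [intervalIntegral.integral_eq_sub_of_hasDerivAt (fun θ _ => hderiv θ) hcont]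
    have hsin8 : Real.sin (4*(2*Real.pi)) = 0 := by
      rw [show (4:ℝ)*(2*Real.pi) = (8:ℤ)*Real.pi by push_cast; ring]
      exact Real.sin_int_mul_pi 8
    have hcos8 : Real.cos (4*(2*Real.pi)) = 1 := by
      rw [show (4:ℝ)*(2*Real.pi) = (4:ℕ)*(2*Real.pi) by push_cast; ring]
      exact Real.cos_nat_mul_two_pi 4
    rw [hsin8, hcos8]
    simp
    ring
  have hπ : Real.pi ≠ 0 := Real.pi_ne_zero
  have hmain : (1 / (2 * Real.pi)) * (∫ θ in (0:ℝ)..(2 * Real.pi),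
      (((O * (Wrot G (θ + Real.pi / 4) * ρ * (Wrot G (θ + Real.pi / 4))ᴴ)).trace.re)
        - ((O * (Wrot G (θ - Real.pi / 4) * ρ * (Wrot G (θ - Real.pi / 4))ᴴ)).trace.re)) ^ 2)
      = 2 * ar ^ 2 + 2 * br ^ 2 := by
    rw [hIntEq, hIntVal]
    field_simp
    ring
  refine ⟨hmain, ?_⟩
  rw [hmain]
  nlinarith [sq_nonneg br]
end
end
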